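/- Let a > 0 and let f : ℝ → ℂ be a Schwartz function. Then for every z ∈ ℂ, [B_{a/2}( f′ + a·x·f )](z) = 2·(B_{a/2}f)′(z), where (B_{a/2}f)′ denotes the complex derivative of the entire function B_{a/2}f. -/

import Mathlib

open Complex Real SchwartzMap

open MeasureTheory Filter

lemma ib_aux {b : ℝ} (hb : 0 < b) (c₀ c₁ : ℝ) :
    Integrable (fun x : ℝ => (c₀ + c₁ * |x|) * Real.exp (-b * x ^ 2)) := by
  have h1 : Integrable (fun x : ℝ => Real.exp (-b * x ^ 2)) := integrable_exp_neg_mul_sq hb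
  have h2 : Integrable (fun x : ℝ => |x| * Real.exp (-b * x ^ 2)) := by
    have h2' := (integrable_rpow_mul_exp_neg_mul_sq hb (s := 1) (by norm_num)).abs
    refine h2'.congr (Eventually.of_forall fun x => ?_)
    simp [pow_one, abs_mul, Real.abs_exp]
  exact ((h1.const_mul c₀).add (h2.const_mul c₁)).congr
    (Eventually.of_forall fun x => by simp only [Pi.add_apply]; ring)

lemma re_kernel (a x : ℝ) (z : ℂ) :
    (↑a * ↑x * z - ↑a / 2 * ↑x ^ 2 - ↑a / 4 * z ^ 2 : ℂ).re
      = a * x * z.re - a / 2 * x ^ 2 - a / 4 * (z ^ 2).re := by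
  have e1 : (↑a / 2 : ℂ) = ((a / 2 : ℝ) : ℂ) := by push_cast; ring
  have e2 : (↑a / 4 : ℂ) = ((a / 4 : ℝ) : ℂ) := by push_cast; ring
  have e3 : ((x : ℂ)) ^ 2 = ((x ^ 2 : ℝ) : ℂ) := by push_cast; ring
  have e4 : (↑a * ↑x : ℂ) = ((a * x : ℝ) : ℂ) := by push_cast; ring
  rw [e1, e2, e3, e4]
  simp only [Complex.sub_re, Complex.mul_re, Complex.ofReal_re, Complex.ofReal_im]
  ring

lemma norm_kernel_le {a : ℝ} (ha : 0 < a) {z : ℂ} {R : ℝ} (hR : ‖z‖ ≤ R) (x : ℝ) :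
    ‖Complex.exp (↑a * ↑x * z - ↑a / 2 * ↑x ^ 2 - ↑a / 4 * z ^ 2)‖ ≤
      Real.exp (5 / 4 * a * R ^ 2) * Real.exp (-(a / 4) * x ^ 2) := by
  have hR0 : 0 ≤ R := (norm_nonneg z).trans hR
  rw [Complex.norm_exp, ← Real.exp_add]
  apply Real.exp_le_exp.2
  rw [re_kernel]
  have h1 : x * z.re ≤ |x| * R := by
    calc x * z.re ≤ |x * z.re| := le_abs_self _
    _ = |x| * |z.re| := abs_mul _ _
    _ ≤ |x| * R := by
        apply mul_le_mul_of_nonneg_left _ (abs_nonneg x)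
        exact (Complex.abs_re_le_norm z).trans hR
  have h2 : -(z ^ 2).re ≤ R ^ 2 := by
    have ha1 : ‖z ^ 2‖ ≤ R ^ 2 := by
      rw [norm_pow]
      exact pow_le_pow_left₀ (norm_nonneg z) hR 2
    nlinarith [neg_abs_le (z ^ 2).re, Complex.abs_re_le_norm (z ^ 2)]
  have h3 : |x| * R ≤ x ^ 2 / 4 + R ^ 2 := by nlinarith [sq_nonneg (|x| - 2 * R), _root_.sq_abs x]
  have h4 : a * (x * z.re) ≤ a * (|x| * R) := mul_le_mul_of_nonneg_left h1 ha.le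
  have h5 : a * (|x| * R) ≤ a * (x ^ 2 / 4 + R ^ 2) := mul_le_mul_of_nonneg_left h3 ha.le
  have h6 : a / 4 * (-(z ^ 2).re) ≤ a / 4 * R ^ 2 :=
    mul_le_mul_of_nonneg_left h2 (by positivity)
  nlinarith

lemma cont_kernel (a : ℝ) (z : ℂ) :
    Continuous fun x : ℝ => Complex.exp (↑a * ↑x * z - ↑a / 2 * ↑x ^ 2 - ↑a / 4 * z ^ 2) := by
  fun_prop

lemma integ_mul_kernel {a : ℝ} (ha : 0 < a) {g : ℝ → ℂ} (hgc : Continuous g)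
    {M : ℝ} (hg : ∀ x : ℝ, ‖g x‖ ≤ M * (1 + |x|)) (z : ℂ) :
    Integrable (fun x : ℝ =>
      g x * Complex.exp (↑a * ↑x * z - ↑a / 2 * ↑x ^ 2 - ↑a / 4 * z ^ 2)) := by
  have hb : (0:ℝ) < a / 4 := by positivity
  have hM : 0 ≤ M := by
    have := (norm_nonneg (g 0)).trans (hg 0)
    simpa using this
  refine (ib_aux hb (M * Real.exp (5 / 4 * a * ‖z‖ ^ 2))
      (M * Real.exp (5 / 4 * a * ‖z‖ ^ 2))).mono'
    (hgc.mul (cont_kernel a z)).aestronglyMeasurable ?_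
  filter_upwards with x
  rw [norm_mul]
  calc ‖g x‖ * ‖Complex.exp (↑a * ↑x * z - ↑a / 2 * ↑x ^ 2 - ↑a / 4 * z ^ 2)‖
      ≤ (M * (1 + |x|)) * (Real.exp (5 / 4 * a * ‖z‖ ^ 2) * Real.exp (-(a / 4) * x ^ 2)) :=
        mul_le_mul (hg x) (norm_kernel_le ha (le_refl ‖z‖) x) (norm_nonneg _)
          (mul_nonneg hM (by positivity))
    _ = (M * Real.exp (5 / 4 * a * ‖z‖ ^ 2) + M * Real.exp (5 / 4 * a * ‖z‖ ^ 2) * |x|) *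
        Real.exp (-(a / 4) * x ^ 2) := by ring

lemma hasDerivAt_kernel_z (a x : ℝ) (w : ℂ) :
    HasDerivAt (fun z : ℂ => Complex.exp (↑a * ↑x * z - ↑a / 2 * ↑x ^ 2 - ↑a / 4 * z ^ 2))
      ((↑a * ↑x - ↑a / 2 * w) *
        Complex.exp (↑a * ↑x * w - ↑a / 2 * ↑x ^ 2 - ↑a / 4 * w ^ 2)) w := by
  have h1 : HasDerivAt (fun z : ℂ => ↑a * ↑x * z) ((↑a * ↑x : ℂ)) w := by
    simpa using (hasDerivAt_id w).const_mul (↑a * ↑x : ℂ)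
  have h2 := (hasDerivAt_pow 2 w).const_mul ((↑a : ℂ) / 4)
  have h : HasDerivAt (fun z : ℂ => ↑a * ↑x * z - ↑a / 2 * ↑x ^ 2 - ↑a / 4 * z ^ 2)
      (↑a * ↑x - ↑a / 2 * w) w := by
    have h3 := (h1.sub_const ((↑a : ℂ) / 2 * ↑x ^ 2)).sub h2
    refine h3.congr_deriv ?_
    push_cast
    ring
  exact h.cexp.congr_deriv (by ring)

lemma hasDerivAt_kernel_x (a : ℝ) (z : ℂ) (x : ℝ) :
    HasDerivAt (fun y : ℝ => Complex.exp (↑a * ↑y * z - ↑a / 2 * ↑y ^ 2 - ↑a / 4 * z ^ 2))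
      ((↑a * z - ↑a * ↑x) *
        Complex.exp (↑a * ↑x * z - ↑a / 2 * ↑x ^ 2 - ↑a / 4 * z ^ 2)) x := by
  have h1 : HasDerivAt (fun w : ℂ => ↑a * w * z) ((↑a : ℂ) * z) (↑x : ℂ) := by
    have := ((hasDerivAt_id (↑x : ℂ)).const_mul (↑a : ℂ)).mul_const z
    simpa using this
  have h2 := (hasDerivAt_pow 2 (↑x : ℂ)).const_mul ((↑a : ℂ) / 2)
  have h : HasDerivAt (fun w : ℂ => ↑a * w * z - ↑a / 2 * w ^ 2 - ↑a / 4 * z ^ 2)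
      (↑a * z - ↑a * ↑x) (↑x : ℂ) := by
    have h3 := (h1.sub h2).sub_const ((↑a : ℂ) / 4 * z ^ 2)
    refine h3.congr_deriv ?_
    push_cast
    ring
  exact h.cexp.comp_ofReal.congr_deriv (by ring)

/-- The (parametrized) Bargmann transform `B_{a/2}`:
`(B_{a/2}f)(z) = (a/π)^{1/4} ∫_ℝ f(x) e^{axz − (a/2)x² − (a/4)z²} dx`. -/
noncomputable def bargmann (a : ℝ) (f : ℝ → ℂ) (z : ℂ) : ℂ :=
  ((a / Real.pi) ^ ((1 : ℝ) / 4) : ℝ) *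
    ∫ x : ℝ, f x * Complex.exp (a * x * z - (a / 2) * x ^ 2 - (a / 4) * z ^ 2)

set_option maxHeartbeats 1000000 in
/-- [B_{a/2}(f' + a x f)](z) = 2 (B f)'(z) for Schwartz f. -/
theorem bargmann_creation (a : ℝ) (ha : 0 < a) (f : SchwartzMap ℝ ℂ) (z : ℂ) :
    bargmann a (fun x : ℝ => deriv (fun y : ℝ => f y) x + (a : ℂ) * (x : ℂ) * f x) z =
      2 * deriv (bargmann a (fun x : ℝ => f x)) z := by
  obtain ⟨M₀, hM₀pos, hM₀⟩ := f.decay 0 0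
  obtain ⟨M₁, hM₁pos, hM₁⟩ := f.decay 1 0
  obtain ⟨M₂, hM₂pos, hM₂⟩ := (SchwartzMap.derivCLM ℝ ℂ f).decay 0 0
  simp only [norm_iteratedFDeriv_zero, pow_zero, one_mul, pow_one, Real.norm_eq_abs]
    at hM₀ hM₁ hM₂
  have hM₀0 : 0 ≤ M₀ := hM₀pos.le
  have hM₁0 : 0 ≤ M₁ := hM₁pos.le
  have hM₂0 : 0 ≤ M₂ := hM₂pos.le
  have hgf : ∀ x : ℝ, ‖f x‖ ≤ M₀ * (1 + |x|) := fun x => by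
    nlinarith [hM₀ x, abs_nonneg x]
  have hgxf : ∀ x : ℝ, ‖(x : ℂ) * f x‖ ≤ M₁ * (1 + |x|) := fun x => by
    rw [norm_mul, Complex.norm_real, Real.norm_eq_abs]
    nlinarith [hM₁ x, abs_nonneg x]
  have hgdf : ∀ x : ℝ, ‖SchwartzMap.derivCLM ℝ ℂ f x‖ ≤ M₂ * (1 + |x|) := fun x => by
    nlinarith [hM₂ x, abs_nonneg x]
  -- integrability
  have hIf : ∀ w : ℂ, Integrable (fun x : ℝ =>
      f x * Complex.exp (↑a * ↑x * w - ↑a / 2 * ↑x ^ 2 - ↑a / 4 * w ^ 2)) :=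
    fun w => integ_mul_kernel ha f.continuous hgf w
  have hIxf : Integrable (fun x : ℝ =>
      (x : ℂ) * f x * Complex.exp (↑a * ↑x * z - ↑a / 2 * ↑x ^ 2 - ↑a / 4 * z ^ 2)) :=
    integ_mul_kernel ha (Complex.continuous_ofReal.mul f.continuous) hgxf z
  have hIdf : Integrable (fun x : ℝ =>
      SchwartzMap.derivCLM ℝ ℂ f x *
        Complex.exp (↑a * ↑x * z - ↑a / 2 * ↑x ^ 2 - ↑a / 4 * z ^ 2)) :=
    integ_mul_kernel ha (SchwartzMap.derivCLM ℝ ℂ f).continuous hgdf z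
  have hIdf' : Integrable (fun x : ℝ =>
      deriv (fun y : ℝ => f y) x *
        Complex.exp (↑a * ↑x * z - ↑a / 2 * ↑x ^ 2 - ↑a / 4 * z ^ 2)) :=
    hIdf.congr (Eventually.of_forall fun x => by simp only [SchwartzMap.derivCLM_apply])
  -- integration by parts
  have huv' : Integrable ((fun x : ℝ =>
      Complex.exp (↑a * ↑x * z - ↑a / 2 * ↑x ^ 2 - ↑a / 4 * z ^ 2)) *
      fun x : ℝ => deriv (fun y : ℝ => f y) x) := by
    refine hIdf'.congr (Eventually.of_forall fun x => ?_)
    simp only [Pi.mul_apply]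
    ring
  have hu'v : Integrable ((fun x : ℝ => (↑a * z - ↑a * ↑x) *
      Complex.exp (↑a * ↑x * z - ↑a / 2 * ↑x ^ 2 - ↑a / 4 * z ^ 2)) *
      fun x : ℝ => f x) := by
    refine (((hIf z).const_mul (↑a * z)).sub (hIxf.const_mul (↑a : ℂ))).congr
      (Eventually.of_forall fun x => ?_)
    simp only [Pi.sub_apply, Pi.mul_apply]
    ring
  have huv : Integrable ((fun x : ℝ =>
      Complex.exp (↑a * ↑x * z - ↑a / 2 * ↑x ^ 2 - ↑a / 4 * z ^ 2)) *
      fun x : ℝ => f x) := by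
    refine (hIf z).congr (Eventually.of_forall fun x => ?_)
    simp only [Pi.mul_apply]
    ring
  have hibp := integral_mul_deriv_eq_deriv_mul_of_integrable
    (u := fun x : ℝ => Complex.exp (↑a * ↑x * z - ↑a / 2 * ↑x ^ 2 - ↑a / 4 * z ^ 2))
    (u' := fun x : ℝ => (↑a * z - ↑a * ↑x) *
      Complex.exp (↑a * ↑x * z - ↑a / 2 * ↑x ^ 2 - ↑a / 4 * z ^ 2))
    (v := fun x : ℝ => f x) (v' := fun x : ℝ => deriv (fun y : ℝ => f y) x)
    (fun x _ => hasDerivAt_kernel_x a z x)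
    (fun x _ => (f.differentiable.differentiableAt).hasDerivAt)
    huv' hu'v huv
  -- derivative under the integral sign
  set R : ℝ := ‖z‖ + 1 with hR
  have hR0 : 0 ≤ R := by positivity
  set c : ℝ := M₀ * (a + a / 2 * R) * Real.exp (5 / 4 * a * R ^ 2) with hc
  have hbound_int : Integrable (fun x : ℝ => (c + c * |x|) * Real.exp (-(a / 4) * x ^ 2)) :=
    ib_aux (by positivity) c c
  clear_value R c
  have hder := hasDerivAt_integral_of_dominated_loc_of_deriv_le (μ := volume) (s := Metric.ball z 1) (x₀ := z)
    (Metric.ball_mem_nhds z one_pos)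
    (F := fun (w : ℂ) (x : ℝ) =>
      f x * Complex.exp (↑a * ↑x * w - ↑a / 2 * ↑x ^ 2 - ↑a / 4 * w ^ 2))
    (F' := fun (w : ℂ) (x : ℝ) => f x * ((↑a * ↑x - ↑a / 2 * w) *
      Complex.exp (↑a * ↑x * w - ↑a / 2 * ↑x ^ 2 - ↑a / 4 * w ^ 2)))
    (bound := fun x : ℝ => (c + c * |x|) * Real.exp (-(a / 4) * x ^ 2))
    (Eventually.of_forall fun w => (hIf w).aestronglyMeasurable)
    (hIf z)
    (by
      have hcont : Continuous fun x : ℝ => f x * ((↑a * ↑x - ↑a / 2 * z) *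
          Complex.exp (↑a * ↑x * z - ↑a / 2 * ↑x ^ 2 - ↑a / 4 * z ^ 2)) :=
        f.continuous.mul (((continuous_const.mul Complex.continuous_ofReal).sub
          continuous_const).mul (cont_kernel a z))
      exact hcont.aestronglyMeasurable)
    (by
      filter_upwards with x
      intro w hw
      have hwR : ‖w‖ ≤ R := by
        have h1 : ‖w - z‖ < 1 := mem_ball_iff_norm.1 hw
        have h2 : ‖w‖ ≤ ‖z‖ + ‖w - z‖ := by
          simpa using norm_add_le z (w - z)
        rw [hR]; linarith
      have hker := norm_kernel_le ha hwR x
      have hcoef : ‖(↑a * ↑x - ↑a / 2 * w : ℂ)‖ ≤ a * |x| + a / 2 * R := by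
        have e1 : ‖(↑a * ↑x : ℂ)‖ = a * |x| := by
          rw [norm_mul, Complex.norm_real, Complex.norm_real, Real.norm_eq_abs,
            Real.norm_eq_abs, abs_of_pos ha]
        have e2 : ‖((↑a : ℂ) / 2 * w)‖ = a / 2 * ‖w‖ := by
          rw [norm_mul, norm_div, Complex.norm_real, Real.norm_eq_abs, abs_of_pos ha]
          norm_num
        calc ‖(↑a * ↑x - ↑a / 2 * w : ℂ)‖ ≤ ‖(↑a * ↑x : ℂ)‖ + ‖((↑a : ℂ) / 2 * w)‖ :=
              norm_sub_le _ _
          _ ≤ a * |x| + a / 2 * R := by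
              rw [e1, e2]
              have : a / 2 * ‖w‖ ≤ a / 2 * R := by
                apply mul_le_mul_of_nonneg_left hwR (by positivity)
              linarith
      have hkey : a * |x| + a / 2 * R ≤ (a + a / 2 * R) * (1 + |x|) := by
        nlinarith [abs_nonneg x, ha.le, hR0, mul_nonneg (mul_nonneg ha.le hR0) (abs_nonneg x)]
      rw [norm_mul, norm_mul]
      calc ‖f x‖ * (‖(↑a * ↑x - ↑a / 2 * w : ℂ)‖ *
            ‖Complex.exp (↑a * ↑x * w - ↑a / 2 * ↑x ^ 2 - ↑a / 4 * w ^ 2)‖)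
          ≤ M₀ * ((a * |x| + a / 2 * R) *
              (Real.exp (5 / 4 * a * R ^ 2) * Real.exp (-(a / 4) * x ^ 2))) := by
            apply mul_le_mul (hM₀ x) ?_ (by positivity) hM₀0
            apply mul_le_mul hcoef hker (norm_nonneg _) ?_
            have : (0:ℝ) ≤ a / 2 * R := by positivity
            nlinarith [abs_nonneg x, ha.le, hR0, mul_nonneg (mul_nonneg ha.le hR0) (abs_nonneg x)]
        _ ≤ M₀ * (((a + a / 2 * R) * (1 + |x|)) *
              (Real.exp (5 / 4 * a * R ^ 2) * Real.exp (-(a / 4) * x ^ 2))) := by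
            apply mul_le_mul_of_nonneg_left ?_ hM₀0
            apply mul_le_mul_of_nonneg_right hkey (by positivity)
        _ = (c + c * |x|) * Real.exp (-(a / 4) * x ^ 2) := by rw [hc]; ring)
    hbound_int
    (Eventually.of_forall fun x => fun w _ => (hasDerivAt_kernel_z a x w).const_mul (f x))
  -- assemble
  have hBder : HasDerivAt (bargmann a (fun x : ℝ => f x))
      ((((a / Real.pi) ^ ((1 : ℝ) / 4) : ℝ) : ℂ) *
        ∫ x : ℝ, f x * ((↑a * ↑x - ↑a / 2 * z) *
          Complex.exp (↑a * ↑x * z - ↑a / 2 * ↑x ^ 2 - ↑a / 4 * z ^ 2))) z :=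
    hder.2.const_mul _
  rw [hBder.deriv]
  simp only [bargmann]
  -- integral identities
  have hsplit : (∫ x : ℝ, (deriv (fun y : ℝ => f y) x + ↑a * ↑x * f x) *
        Complex.exp (↑a * ↑x * z - ↑a / 2 * ↑x ^ 2 - ↑a / 4 * z ^ 2))
      = (∫ x : ℝ, deriv (fun y : ℝ => f y) x *
          Complex.exp (↑a * ↑x * z - ↑a / 2 * ↑x ^ 2 - ↑a / 4 * z ^ 2))
        + ↑a * ∫ x : ℝ, (x : ℂ) * f x *
            Complex.exp (↑a * ↑x * z - ↑a / 2 * ↑x ^ 2 - ↑a / 4 * z ^ 2) := by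
    rw [← MeasureTheory.integral_const_mul, ← MeasureTheory.integral_add hIdf'
      (hIxf.const_mul (↑a : ℂ))]
    congr 1
    funext x
    ring
  have hrhs : (∫ x : ℝ, f x * ((↑a * ↑x - ↑a / 2 * z) *
        Complex.exp (↑a * ↑x * z - ↑a / 2 * ↑x ^ 2 - ↑a / 4 * z ^ 2)))
      = ↑a * (∫ x : ℝ, (x : ℂ) * f x *
            Complex.exp (↑a * ↑x * z - ↑a / 2 * ↑x ^ 2 - ↑a / 4 * z ^ 2))
        - ↑a / 2 * z * ∫ x : ℝ, f x *
            Complex.exp (↑a * ↑x * z - ↑a / 2 * ↑x ^ 2 - ↑a / 4 * z ^ 2) := by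
    rw [← MeasureTheory.integral_const_mul, ← MeasureTheory.integral_const_mul,
      ← MeasureTheory.integral_sub (hIxf.const_mul (↑a : ℂ))
        ((hIf z).const_mul (↑a / 2 * z))]
    congr 1
    funext x
    ring
  have hibp2 : (∫ x : ℝ, deriv (fun y : ℝ => f y) x *
        Complex.exp (↑a * ↑x * z - ↑a / 2 * ↑x ^ 2 - ↑a / 4 * z ^ 2))
      = ↑a * (∫ x : ℝ, (x : ℂ) * f x *
            Complex.exp (↑a * ↑x * z - ↑a / 2 * ↑x ^ 2 - ↑a / 4 * z ^ 2))
        - ↑a * z * ∫ x : ℝ, f x *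
            Complex.exp (↑a * ↑x * z - ↑a / 2 * ↑x ^ 2 - ↑a / 4 * z ^ 2) := by
    have h1 : (∫ x : ℝ, deriv (fun y : ℝ => f y) x *
          Complex.exp (↑a * ↑x * z - ↑a / 2 * ↑x ^ 2 - ↑a / 4 * z ^ 2))
        = ∫ x : ℝ, Complex.exp (↑a * ↑x * z - ↑a / 2 * ↑x ^ 2 - ↑a / 4 * z ^ 2) *
            deriv (fun y : ℝ => f y) x := by
      congr 1; funext x; ring
    have h2 : (∫ x : ℝ, ((↑a * z - ↑a * ↑x) *
          Complex.exp (↑a * ↑x * z - ↑a / 2 * ↑x ^ 2 - ↑a / 4 * z ^ 2)) * f x)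
        = ↑a * z * (∫ x : ℝ, f x *
              Complex.exp (↑a * ↑x * z - ↑a / 2 * ↑x ^ 2 - ↑a / 4 * z ^ 2))
          - ↑a * ∫ x : ℝ, (x : ℂ) * f x *
              Complex.exp (↑a * ↑x * z - ↑a / 2 * ↑x ^ 2 - ↑a / 4 * z ^ 2) := by
      rw [← MeasureTheory.integral_const_mul, ← MeasureTheory.integral_const_mul,
        ← MeasureTheory.integral_sub ((hIf z).const_mul (↑a * z))
          (hIxf.const_mul (↑a : ℂ))]
      congr 1
      funext x
      ring
    rw [h1, hibp, h2]
    ring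
  rw [hsplit, hibp2, hrhs]
  ring
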